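/- The square of L₂(z)=E₂(z)−2E₂(2z) equals (1/5)E₄(z)+(4/5)E₄(2z), i.e., (E₂(z)−2E₂(2z))² = (1/5)E₄(z)+(4/5)E₄(2z) as q-series (equivalently, as holomorphic functions on the upper half plane). -/

import Mathlib

open Finset PowerSeries

/-- σ_k(n) = sum of k-th powers of the positive divisors of n. -/
def sig (k n : ℕ) : ℕ := ∑ d ∈ n.divisors, d ^ k

/-- σ_k(n/d) ∈ ℚ with the convention that it is 0 when d ∤ n. -/
def sigQ (k n d : ℕ) : ℚ := if d ∣ n then (sig k (n / d) : ℚ) else 0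

/-- The formal power series E₂(q^t) = 1 − 24 Σ_{m≥1} σ(m) q^{tm}. -/
noncomputable def E2t (t : ℕ) : PowerSeries ℚ :=
  PowerSeries.mk fun n => if n = 0 then 1 else if t ∣ n then -24 * (sig 1 (n / t) : ℚ) else 0

/-- The formal power series E₄(q^t) = 1 + 240 Σ_{m≥1} σ₃(m) q^{tm}. -/
noncomputable def E4t (t : ℕ) : PowerSeries ℚ :=
  PowerSeries.mk fun n => if n = 0 then 1 else if t ∣ n then 240 * (sig 3 (n / t) : ℚ) else 0


lemma Ioo_zero_one : Ioo 0 1 = (∅ : Finset ℕ) := by ext a; simp; omega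

lemma Ioo_succ {D : ℕ} (h : 0 < D) : Ioo 0 (D + 1) = insert D (Ioo 0 D) := by
  ext a; simp only [mem_Ioo, mem_insert]; omega

/-- Sum of a over 0<a<D. -/
lemma sumIoo_id (D : ℕ) : ∑ a ∈ Ioo 0 D, (a : ℚ) = D * (D - 1) / 2 := by
  induction D with
  | zero => simp
  | succ D ih =>
    rcases Nat.eq_zero_or_pos D with h | h
    · subst h; rw [Ioo_zero_one]; simp
    · rw [Ioo_succ h, sum_insert (by simp), ih]; push_cast; ring

lemma sumIoo_sq (D : ℕ) : ∑ a ∈ Ioo 0 D, (a : ℚ)^2 = D * (D - 1) * (2*D - 1) / 6 := by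
  induction D with
  | zero => simp
  | succ D ih =>
    rcases Nat.eq_zero_or_pos D with h | h
    · subst h; rw [Ioo_zero_one]; simp
    · rw [Ioo_succ h, sum_insert (by simp), ih]; push_cast; ring

lemma sumIoo_sign (D : ℕ) (hD : 0 < D) :
    ∑ a ∈ Ioo 0 D, (-1 : ℚ)^a = if 2 ∣ D then -1 else 0 := by
  induction D with
  | zero => omega
  | succ D ih =>
    rcases Nat.eq_zero_or_pos D with h | h
    · subst h; rw [Ioo_zero_one]; norm_num
    · rw [Ioo_succ h, sum_insert (by simp), ih h]
      rcases Nat.even_or_odd D with he | ho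
      · have h1 : 2 ∣ D := he.two_dvd
        have h2 : ¬ (2 ∣ (D+1)) := by omega
        rw [if_pos h1, if_neg h2, (he.neg_one_pow : (-1:ℚ)^D = 1)]; ring
      · have h1 : ¬ 2 ∣ D := by rcases ho with ⟨k, hk⟩; omega
        have h2 : 2 ∣ (D+1) := by rcases ho with ⟨k, hk⟩; omega
        rw [if_pos h2, if_neg h1, (ho.neg_one_pow : (-1:ℚ)^D = -1)]; ring

lemma div_filter_even_quot {n : ℕ} (hn : 2 ∣ n) (h0 : 0 < n) :
    n.divisors.filter (fun d => 2 ∣ n / d) = (n / 2).divisors := by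
  have h20 : 0 < n / 2 := Nat.div_pos (Nat.le_of_dvd h0 hn) (by norm_num)
  ext d
  simp only [mem_filter, Nat.mem_divisors]
  constructor
  · rintro ⟨⟨hd, _⟩, h2⟩
    have hdpos : 0 < d := Nat.pos_of_dvd_of_pos hd h0
    rcases h2 with ⟨m, hm⟩
    have hn' : n = d * (2 * m) := by
      conv_lhs => rw [← Nat.div_mul_cancel hd, hm]
      ring
    have : n / 2 = d * m := by rw [hn', show d * (2*m) = 2 * (d*m) by ring,
      Nat.mul_div_cancel_left _ (by norm_num)]
    exact ⟨⟨m, this⟩, by omega⟩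
  · rintro ⟨⟨k, hk⟩, _⟩
    have hdpos : 0 < d := Nat.pos_of_dvd_of_pos ⟨k, hk⟩ h20
    have hn' : n = d * (2 * k) := by
      rw [← Nat.mul_div_cancel' hn, hk]; ring
    have hq : n / d = 2 * k := by rw [hn', Nat.mul_div_cancel_left _ hdpos]
    exact ⟨⟨⟨2 * k, hn'⟩, by omega⟩, ⟨k, hq⟩⟩

/-- F3 -/
lemma sum_divisors_even_quot {n : ℕ} (h0 : 0 < n) (f : ℕ → ℚ) :
    ∑ d ∈ n.divisors, (if 2 ∣ n / d then f d else 0)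
      = if 2 ∣ n then ∑ d ∈ (n / 2).divisors, f d else 0 := by
  rw [sum_ite, sum_const_zero, add_zero]
  by_cases hn : 2 ∣ n
  · rw [if_pos hn, div_filter_even_quot hn h0]
  · rw [if_neg hn]
    have : n.divisors.filter (fun d => 2 ∣ n / d) = ∅ := by
      rw [filter_eq_empty_iff]
      intro d hd h2
      rw [Nat.mem_divisors] at hd
      exact hn (h2.trans (Nat.div_dvd_of_dvd hd.1))
    rw [this, sum_empty]

/-- F4 -/
lemma sum_divisors_even {n : ℕ} (h0 : 0 < n) (f : ℕ → ℚ) :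
    ∑ d ∈ n.divisors, (if 2 ∣ d then f d else 0)
      = if 2 ∣ n then ∑ d ∈ (n / 2).divisors, f (2 * d) else 0 := by
  rw [sum_ite, sum_const_zero, add_zero]
  by_cases hn : 2 ∣ n
  · rw [if_pos hn]
    have h20 : 0 < n / 2 := Nat.div_pos (Nat.le_of_dvd h0 hn) (by norm_num)
    apply Finset.sum_nbij' (fun d => d / 2) (fun d => 2 * d)
    · intro a ha
      simp only [mem_filter, Nat.mem_divisors] at ha
      rcases ha with ⟨⟨⟨k, hk⟩, _⟩, ⟨m, hm⟩⟩
      subst hm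
      have : n / 2 = m * k := by
        rw [hk, show 2 * m * k = 2 * (m * k) by ring, Nat.mul_div_cancel_left _ (by norm_num)]
      simp only [Nat.mem_divisors]
      exact ⟨⟨k, by rw [Nat.mul_div_cancel_left m (by norm_num)]; exact this⟩, by omega⟩
    · intro a ha
      simp only [Nat.mem_divisors] at ha
      simp only [mem_filter, Nat.mem_divisors]
      rcases ha with ⟨⟨k, hk⟩, _⟩
      have hn' : n = 2 * a * k := by rw [← Nat.mul_div_cancel' hn, hk]; ring
      exact ⟨⟨⟨k, hn'⟩, by omega⟩, ⟨a, rfl⟩⟩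
    · intro a ha
      simp only [mem_filter] at ha
      rcases ha.2 with ⟨m, hm⟩
      omega
    · intro a _; rw [Nat.mul_div_cancel_left a (by norm_num)]
    · intro a ha
      simp only [mem_filter] at ha
      rcases ha.2 with ⟨m, hm⟩
      subst hm
      rw [Nat.mul_div_cancel_left m (by norm_num)]
  · rw [if_neg hn]
    have : n.divisors.filter (fun d => 2 ∣ d) = ∅ := by
      rw [filter_eq_empty_iff]
      intro d hd h2
      rw [Nat.mem_divisors] at hd
      exact hn (h2.trans hd.1)
    rw [this, sum_empty]

abbrev Quad := (ℕ × ℕ) × (ℕ × ℕ)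

def sw (q : Quad) : Quad := ((q.1.2, q.1.1), (q.2.2, q.2.1))

def Phi (q : Quad) : Quad := ((q.1.1 + q.1.2, q.1.2), (q.2.1, q.2.2 - q.2.1))

def Sset (n : ℕ) : Finset Quad :=
  ((range (n+1) ×ˢ range (n+1)) ×ˢ (range (n+1) ×ˢ range (n+1))).filter
    fun q => 0 < q.1.1 ∧ 0 < q.1.2 ∧ 0 < q.2.1 ∧ 0 < q.2.2 ∧
      q.1.1 * q.2.1 + q.1.2 * q.2.2 = n

lemma mem_Sset {n : ℕ} {q : Quad} :
    q ∈ Sset n ↔ 0 < q.1.1 ∧ 0 < q.1.2 ∧ 0 < q.2.1 ∧ 0 < q.2.2 ∧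
      q.1.1 * q.2.1 + q.1.2 * q.2.2 = n := by
  obtain ⟨⟨a, b⟩, x, y⟩ := q
  simp only [Sset, mem_filter, mem_product, mem_range]
  constructor
  · tauto
  · rintro ⟨ha, hb, hx, hy, he⟩
    have h1 : a ≤ a * x := Nat.le_mul_of_pos_right a hx
    have h2 : 0 < b * y := Nat.mul_pos hb hy
    have h3 : b ≤ b * y := Nat.le_mul_of_pos_right b hy
    have h4 : 0 < a * x := Nat.mul_pos ha hx
    have h5 : x ≤ a * x := Nat.le_mul_of_pos_left x ha
    have h6 : y ≤ b * y := Nat.le_mul_of_pos_left y hb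
    exact ⟨⟨⟨by omega, by omega⟩, by omega, by omega⟩, ha, hb, hx, hy, he⟩

lemma sw_mem_Sset {n : ℕ} {q : Quad} (h : q ∈ Sset n) : sw q ∈ Sset n := by
  rw [mem_Sset] at h ⊢
  obtain ⟨⟨a, b⟩, x, y⟩ := q
  simp only [sw] at *
  omega

lemma sum_swap (n : ℕ) (f : Quad → ℚ) (P : Quad → Prop) [DecidablePred P] :
    ∑ q ∈ (Sset n).filter P, f q = ∑ q ∈ (Sset n).filter (fun q => P (sw q)), f (sw q) := by
  apply Finset.sum_nbij' sw sw
  · intro q hq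
    rw [mem_filter] at hq ⊢
    refine ⟨sw_mem_Sset hq.1, ?_⟩
    have : sw (sw q) = q := rfl
    rw [this]; exact hq.2
  · intro q hq
    rw [mem_filter] at hq ⊢
    exact ⟨sw_mem_Sset hq.1, hq.2⟩
  · intro q _; rfl
  · intro q _; rfl
  · intro q _; rfl

lemma sum_phi (n : ℕ) (g : Quad → ℚ) :
    ∑ q ∈ (Sset n).filter (fun q => q.1.2 < q.1.1), g q
      = ∑ q ∈ (Sset n).filter (fun q => q.2.1 < q.2.2), g (Phi q) := by
  apply Finset.sum_nbij'
    (fun q => ((q.1.1 - q.1.2, q.1.2), (q.2.1, q.2.2 + q.2.1)))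
    (fun q => Phi q)
  · intro q hq
    rw [mem_filter, mem_Sset] at hq ⊢
    obtain ⟨⟨a, b⟩, x, y⟩ := q
    obtain ⟨⟨ha, hb, hx, hy, he⟩, hba⟩ := hq
    simp only at *
    have hsub : (a - b) * x = a * x - b * x := Nat.sub_mul a b x
    have hmul : b * (y + x) = b * y + b * x := by ring
    have hle : b * x ≤ a * x := Nat.mul_le_mul_right x hba.le
    refine ⟨⟨by omega, hb, hx, by omega, by omega⟩, by omega⟩
  · intro q hq
    rw [mem_filter, mem_Sset] at hq ⊢
    obtain ⟨⟨a, b⟩, x, y⟩ := q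
    obtain ⟨⟨ha, hb, hx, hy, he⟩, hxy⟩ := hq
    simp only [Phi] at *
    have hmul : (a + b) * x = a * x + b * x := by ring
    have hle : b * x ≤ b * y := Nat.mul_le_mul_left b hxy.le
    have hsub : b * (y - x) = b * y - b * x := by
      rcases Nat.exists_eq_add_of_le hxy.le with ⟨k, hk⟩
      subst hk
      rw [Nat.add_sub_cancel_left, Nat.mul_add, Nat.add_sub_cancel_left]
    refine ⟨⟨by omega, hb, hx, by omega, by omega⟩, by omega⟩
  · intro q hq
    rw [mem_filter] at hq
    obtain ⟨⟨a, b⟩, x, y⟩ := q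
    have hba : b < a := hq.2
    show ((a - b + b, b), (x, y + x - x)) = ((a, b), (x, y))
    have h1 : a - b + b = a := by omega
    have h2 : y + x - x = y := by omega
    rw [h1, h2]
  · intro q hq
    rw [mem_filter] at hq
    obtain ⟨⟨a, b⟩, x, y⟩ := q
    have hxy : x < y := hq.2
    show ((a + b - b, b), (x, y - x + x)) = ((a, b), (x, y))
    have h1 : a + b - b = a := by omega
    have h2 : y - x + x = y := by omega
    rw [h1, h2]
  · intro q hq
    rw [mem_filter] at hq
    obtain ⟨⟨a, b⟩, x, y⟩ := q
    have hba : b < a := hq.2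
    have h1 : a - b + b = a := by omega
    have h2 : y + x - x = y := by omega
    show g ((a, b), (x, y)) = g ((a - b + b, b), (x, y + x - x))
    rw [h1, h2]

section
variable {α : Type*}

lemma trichotomy_sum (s : Finset α) (f : α → ℚ) (u v : α → ℕ) :
    ∑ q ∈ s, f q
      = ∑ q ∈ s.filter (fun q => v q < u q), f q
        + ∑ q ∈ s.filter (fun q => u q < v q), f q
        + ∑ q ∈ s.filter (fun q => u q = v q), f q := by
  rw [← sum_filter_add_sum_filter_not s (fun q => v q < u q) f]
  rw [← sum_filter_add_sum_filter_not (s.filter (fun q => ¬ v q < u q))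
      (fun q => u q < v q) f]
  rw [filter_filter, filter_filter]
  have e1 : s.filter (fun a => ¬ v a < u a ∧ u a < v a) = s.filter (fun q => u q < v q) :=
    filter_congr (fun q _ => by omega)
  have e2 : s.filter (fun a => ¬ v a < u a ∧ ¬ u a < v a) = s.filter (fun q => u q = v q) :=
    filter_congr (fun q _ => by omega)
  rw [e1, e2, add_assoc]
end

lemma star (n : ℕ) (h : Quad → ℚ) :
    (∑ q ∈ (Sset n).filter (fun q => q.2.1 < q.2.2), (h (Phi q) + h (sw (Phi q))))
      + ∑ q ∈ (Sset n).filter (fun q => q.1.1 = q.1.2), h q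
    = (∑ q ∈ (Sset n).filter (fun q => q.2.1 < q.2.2), (h q + h (sw q)))
      + ∑ q ∈ (Sset n).filter (fun q => q.2.1 = q.2.2), h q := by
  have eqA := trichotomy_sum (Sset n) h (fun q => q.1.1) (fun q => q.1.2)
  have eqX := trichotomy_sum (Sset n) h (fun q => q.2.1) (fun q => q.2.2)
  -- swap the (a < b) part onto (b < a)
  have swA : ∑ q ∈ (Sset n).filter (fun q => q.1.1 < q.1.2), h q
      = ∑ q ∈ (Sset n).filter (fun q => q.1.2 < q.1.1), h (sw q) := by
    exact sum_swap n h (fun q => q.1.1 < q.1.2)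
  have swX : ∑ q ∈ (Sset n).filter (fun q => q.2.2 < q.2.1), h q
      = ∑ q ∈ (Sset n).filter (fun q => q.2.1 < q.2.2), h (sw q) := by
    exact sum_swap n h (fun q => q.2.2 < q.2.1)
  have phiH : ∑ q ∈ (Sset n).filter (fun q => q.1.2 < q.1.1), (h q + h (sw q))
      = ∑ q ∈ (Sset n).filter (fun q => q.2.1 < q.2.2), (h (Phi q) + h (sw (Phi q))) :=
    sum_phi n (fun q => h q + h (sw q))
  rw [← phiH]
  rw [sum_add_distrib] at phiH ⊢
  -- it remains to show using eqA, eqX, swA, swX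
  have hA : ∑ q ∈ (Sset n).filter (fun q => q.1.2 < q.1.1), h q
      + ∑ q ∈ (Sset n).filter (fun q => q.1.2 < q.1.1), h (sw q)
      + ∑ q ∈ (Sset n).filter (fun q => q.1.1 = q.1.2), h q = ∑ q ∈ Sset n, h q := by
    rw [eqA, swA]
  have hX : ∑ q ∈ (Sset n).filter (fun q => q.2.1 < q.2.2), h q
      + ∑ q ∈ (Sset n).filter (fun q => q.2.1 < q.2.2), h (sw q)
      + ∑ q ∈ (Sset n).filter (fun q => q.2.1 = q.2.2), h q = ∑ q ∈ Sset n, h q := by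
    conv_rhs => rw [eqX]
    rw [swX]; ring
  rw [sum_add_distrib]
  linarith [hA, hX]

lemma sum_diag_xy (n : ℕ) (hn : 0 < n) (f : Quad → ℚ) :
    ∑ q ∈ (Sset n).filter (fun q => q.2.1 = q.2.2), f q
      = ∑ e ∈ n.divisors, ∑ a ∈ Ioo 0 (n / e), f ((a, n / e - a), (e, e)) := by
  rw [← sum_sigma n.divisors (fun e => Ioo 0 (n / e))
      (fun p => f ((p.2, n / p.1 - p.2), (p.1, p.1)))]
  apply Finset.sum_nbij' (fun q => (⟨q.2.1, q.1.1⟩ : Σ _ : ℕ, ℕ))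
    (fun p => ((p.2, n / p.1 - p.2), (p.1, p.1)))
  · intro q hq
    rw [mem_filter, mem_Sset] at hq
    obtain ⟨⟨a, b⟩, x, y⟩ := q
    obtain ⟨⟨ha, hb, hx, hy, he⟩, hxy⟩ := hq
    simp only at *
    subst hxy
    have hd : (a + b) * x = n := by rw [add_mul]; omega
    have hq : n / x = a + b := by rw [← hd, Nat.mul_div_cancel _ hx]
    simp only [mem_sigma, Nat.mem_divisors, mem_Ioo]
    exact ⟨⟨Dvd.intro_left _ hd, by omega⟩, ha, by omega⟩
  · intro p hp
    simp only [mem_sigma, Nat.mem_divisors, mem_Ioo] at hp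
    obtain ⟨⟨hd, hn0⟩, ha0, halt⟩ := hp
    rw [mem_filter, mem_Sset]
    dsimp only
    have hepos : 0 < p.1 := by
      rcases Nat.eq_zero_or_pos p.1 with h | h
      · exfalso; rw [h] at hd; simp at hd; omega
      · exact h
    have heq : p.2 * p.1 + (n / p.1 - p.2) * p.1 = n := by
      rw [← add_mul]
      have : p.2 + (n / p.1 - p.2) = n / p.1 := by omega
      rw [this, Nat.div_mul_cancel hd]
    exact ⟨⟨ha0, by omega, hepos, hepos, heq⟩, rfl⟩
  · intro q hq
    rw [mem_filter, mem_Sset] at hq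
    obtain ⟨⟨a, b⟩, x, y⟩ := q
    obtain ⟨⟨ha, hb, hx, hy, he⟩, hxy⟩ := hq
    simp only at *
    subst hxy
    have hd : (a + b) * x = n := by rw [add_mul]; omega
    have hq : n / x = a + b := by rw [← hd, Nat.mul_div_cancel _ hx]
    show ((a, n / x - a), (x, x)) = ((a, b), (x, x))
    rw [hq]
    congr 2
    omega
  · intro p hp; rfl
  · intro q hq
    rw [mem_filter, mem_Sset] at hq
    obtain ⟨⟨a, b⟩, x, y⟩ := q
    obtain ⟨⟨ha, hb, hx, hy, he⟩, hxy⟩ := hq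
    simp only at *
    subst hxy
    have hd : (a + b) * x = n := by rw [add_mul]; omega
    have hq : n / x = a + b := by rw [← hd, Nat.mul_div_cancel _ hx]
    show f ((a, b), (x, x)) = f ((a, n / x - a), (x, x))
    rw [hq]
    congr 3
    omega

lemma sum_diag_ab (n : ℕ) (hn : 0 < n) (f : Quad → ℚ) :
    ∑ q ∈ (Sset n).filter (fun q => q.1.1 = q.1.2), f q
      = ∑ d ∈ n.divisors, ∑ x ∈ Ioo 0 (n / d), f ((d, d), (x, n / d - x)) := by
  rw [← sum_sigma n.divisors (fun d => Ioo 0 (n / d))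
      (fun p => f ((p.1, p.1), (p.2, n / p.1 - p.2)))]
  apply Finset.sum_nbij' (fun q => (⟨q.1.1, q.2.1⟩ : Σ _ : ℕ, ℕ))
    (fun p => ((p.1, p.1), (p.2, n / p.1 - p.2)))
  · intro q hq
    rw [mem_filter, mem_Sset] at hq
    obtain ⟨⟨a, b⟩, x, y⟩ := q
    obtain ⟨⟨ha, hb, hx, hy, he⟩, hab⟩ := hq
    simp only at *
    subst hab
    have hd : a * (x + y) = n := by rw [mul_add]; omega
    have hq : n / a = x + y := by rw [← hd, Nat.mul_div_cancel_left _ ha]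
    simp only [mem_sigma, Nat.mem_divisors, mem_Ioo]
    exact ⟨⟨Dvd.intro _ hd, by omega⟩, hx, by omega⟩
  · intro p hp
    simp only [mem_sigma, Nat.mem_divisors, mem_Ioo] at hp
    obtain ⟨⟨hd, hn0⟩, hx0, hxlt⟩ := hp
    rw [mem_filter, mem_Sset]
    dsimp only
    have hdpos : 0 < p.1 := by
      rcases Nat.eq_zero_or_pos p.1 with h | h
      · exfalso; rw [h] at hd; simp at hd; omega
      · exact h
    have heq : p.1 * p.2 + p.1 * (n / p.1 - p.2) = n := by
      rw [← mul_add]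
      have : p.2 + (n / p.1 - p.2) = n / p.1 := by omega
      rw [this, Nat.mul_div_cancel' hd]
    exact ⟨⟨hdpos, hdpos, hx0, by omega, heq⟩, rfl⟩
  · intro q hq
    rw [mem_filter, mem_Sset] at hq
    obtain ⟨⟨a, b⟩, x, y⟩ := q
    obtain ⟨⟨ha, hb, hx, hy, he⟩, hab⟩ := hq
    simp only at *
    subst hab
    have hd : a * (x + y) = n := by rw [mul_add]; omega
    have hq : n / a = x + y := by rw [← hd, Nat.mul_div_cancel_left _ ha]
    show ((a, a), (x, n / a - x)) = ((a, a), (x, y))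
    rw [hq]
    congr 2
    omega
  · intro p hp; rfl
  · intro q hq
    rw [mem_filter, mem_Sset] at hq
    obtain ⟨⟨a, b⟩, x, y⟩ := q
    obtain ⟨⟨ha, hb, hx, hy, he⟩, hab⟩ := hq
    simp only at *
    subst hab
    have hd : a * (x + y) = n := by rw [mul_add]; omega
    have hq : n / a = x + y := by rw [← hd, Nat.mul_div_cancel_left _ ha]
    show f ((a, a), (x, y)) = f ((a, a), (x, n / a - x))
    rw [hq]
    congr 3
    omega

noncomputable def QS (k m : ℕ) : ℚ := ∑ d ∈ m.divisors, (d:ℚ)^k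

noncomputable def h1 : Quad → ℚ := fun q =>
  (1/2) * (q.1.1:ℚ)^2 * (-1)^q.2.2 + (1/2) * (q.1.1:ℚ)^2 * (-1)^q.2.1 * (-1)^q.2.2
    - (1/2) * (q.1.1:ℚ) * (q.1.2:ℚ) * (-1)^q.2.1 * (-1)^q.2.2

lemma neg_pow_sub {x y : ℕ} (h : x ≤ y) : (-1:ℚ)^(y-x) = (-1)^x * (-1)^y := by
  have h1 : (-1:ℚ)^(y-x) * (-1)^x = (-1)^y := by rw [← pow_add, Nat.sub_add_cancel h]
  have h2 : (-1:ℚ)^x * (-1)^x = 1 := by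
    rw [← pow_add]; exact Even.neg_one_pow ⟨x, by omega⟩
  calc (-1:ℚ)^(y-x) = (-1)^(y-x) * ((-1)^x * (-1)^x) := by rw [h2, mul_one]
    _ = ((-1)^(y-x) * (-1)^x) * (-1)^x := by ring
    _ = (-1)^y * (-1)^x := by rw [h1]
    _ = (-1)^x * (-1)^y := by ring

lemma h1_pointwise {a b x y : ℕ} (hxy : x < y) :
    h1 (Phi ((a,b),(x,y))) + h1 (sw (Phi ((a,b),(x,y))))
      = (h1 ((a,b),(x,y)) + h1 (sw ((a,b),(x,y))))
        + 2 * (a:ℚ) * (b:ℚ) * (-1)^x * (-1)^y := by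
  simp only [h1, sw, Phi]
  rw [neg_pow_sub hxy.le]
  push_cast
  rcases Nat.even_or_odd x with hx | hx <;> rcases Nat.even_or_odd y with hy | hy <;>
    rw [hx.neg_one_pow, hy.neg_one_pow] <;> ring

def fV : Quad → ℚ := fun q => (q.1.1:ℚ) * (q.1.2:ℚ) * (-1)^q.2.1 * (-1)^q.2.2

lemma V_eq (n : ℕ) :
    ∑ q ∈ Sset n, fV q
      = (∑ q ∈ (Sset n).filter (fun q => q.2.1 = q.2.2), h1 q)
        - (∑ q ∈ (Sset n).filter (fun q => q.1.1 = q.1.2), h1 q)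
        + ∑ q ∈ (Sset n).filter (fun q => q.2.1 = q.2.2), fV q := by
  have hstar := star n h1
  -- rewrite the Phi side using the pointwise certificate
  have hcert : ∑ q ∈ (Sset n).filter (fun q => q.2.1 < q.2.2),
      (h1 (Phi q) + h1 (sw (Phi q)))
      = ∑ q ∈ (Sset n).filter (fun q => q.2.1 < q.2.2), ((h1 q + h1 (sw q)) + 2 * fV q) := by
    apply sum_congr rfl
    intro q hq
    rw [mem_filter] at hq
    obtain ⟨⟨a, b⟩, x, y⟩ := q
    have hxy : x < y := hq.2
    simpa [fV, mul_assoc, mul_comm, mul_left_comm] using h1_pointwise (a := a) (b := b) hxy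
  rw [hcert, sum_add_distrib] at hstar
  -- now hstar : Σ_R H + Σ_R 2fV + E = Σ_R H + X
  have hRf : ∑ q ∈ (Sset n).filter (fun q => q.2.1 < q.2.2), 2 * fV q
      = (∑ q ∈ (Sset n).filter (fun q => q.2.1 = q.2.2), h1 q)
        - ∑ q ∈ (Sset n).filter (fun q => q.1.1 = q.1.2), h1 q := by
    linarith [hstar]
  have htri := trichotomy_sum (Sset n) fV (fun q => q.2.1) (fun q => q.2.2)
  have hsw : ∑ q ∈ (Sset n).filter (fun q => q.2.2 < q.2.1), fV q
      = ∑ q ∈ (Sset n).filter (fun q => q.2.1 < q.2.2), fV q := by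
    rw [sum_swap n fV (fun q => q.2.2 < q.2.1)]
    apply sum_congr
    · apply filter_congr
      intro q _
      simp [sw]
    · intro q _
      obtain ⟨⟨a, b⟩, x, y⟩ := q
      simp only [fV, sw]
      ring
  have h2f : ∑ q ∈ (Sset n).filter (fun q => q.2.1 < q.2.2), 2 * fV q
      = 2 * ∑ q ∈ (Sset n).filter (fun q => q.2.1 < q.2.2), fV q := by
    rw [mul_sum]
  rw [htri, hsw]
  linarith [hRf, h2f]

noncomputable def G2q (D : ℕ) : ℚ := (D:ℚ) * ((D:ℚ) - 1) * (2*(D:ℚ) - 1) / 6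
noncomputable def ABq (D : ℕ) : ℚ := (D:ℚ) * ((D:ℚ)^2 - 1) / 6

lemma sumIoo_sq' (D : ℕ) : ∑ a ∈ Ioo 0 D, (a:ℚ)^2 = G2q D := by
  rw [sumIoo_sq, G2q]

lemma sumIoo_ab' (D : ℕ) : ∑ a ∈ Ioo 0 D, (a:ℚ) * ((D:ℚ) - (a:ℚ)) = ABq D := by
  calc ∑ a ∈ Ioo 0 D, (a:ℚ) * ((D:ℚ) - (a:ℚ))
      = ∑ a ∈ Ioo 0 D, ((D:ℚ) * (a:ℚ) - (a:ℚ)^2) := sum_congr rfl (fun a _ => by ring)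
    _ = (D:ℚ) * (∑ a ∈ Ioo 0 D, (a:ℚ)) - ∑ a ∈ Ioo 0 D, (a:ℚ)^2 := by
        rw [sum_sub_distrib, mul_sum]
    _ = ABq D := by rw [sumIoo_id, sumIoo_sq, ABq]; ring

lemma sum_G2 (m : ℕ) : ∑ d ∈ m.divisors, G2q d = (2*QS 3 m - 3*QS 2 m + QS 1 m)/6 := by
  calc ∑ d ∈ m.divisors, G2q d
      = ∑ d ∈ m.divisors, (2*(d:ℚ)^3 - 3*(d:ℚ)^2 + (d:ℚ))/6 :=
        sum_congr rfl (fun d _ => by rw [G2q]; ring)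
    _ = (∑ d ∈ m.divisors, (2*(d:ℚ)^3 - 3*(d:ℚ)^2 + (d:ℚ)))/6 := by rw [sum_div]
    _ = (2*QS 3 m - 3*QS 2 m + QS 1 m)/6 := by
        rw [sum_add_distrib, sum_sub_distrib, ← mul_sum, ← mul_sum, QS, QS, QS]
        norm_num

lemma sum_AB (m : ℕ) : ∑ d ∈ m.divisors, ABq d = (QS 3 m - QS 1 m)/6 := by
  calc ∑ d ∈ m.divisors, ABq d
      = ∑ d ∈ m.divisors, ((d:ℚ)^3 - (d:ℚ))/6 :=
        sum_congr rfl (fun d _ => by rw [ABq]; ring)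
    _ = (∑ d ∈ m.divisors, ((d:ℚ)^3 - (d:ℚ)))/6 := by rw [sum_div]
    _ = (QS 3 m - QS 1 m)/6 := by
        rw [sum_sub_distrib, QS, QS]
        norm_num

lemma sign_sum_divisors (n : ℕ) (hn : 0 < n) (c : ℕ → ℚ) :
    ∑ e ∈ n.divisors, (-1:ℚ)^e * c (n/e)
      = 2 * (if 2 ∣ n then ∑ d ∈ (n/2).divisors, c d else 0) - ∑ d ∈ n.divisors, c d := by
  have h1 : ∀ e, (-1:ℚ)^e * c (n/e) = 2*(if 2 ∣ e then c (n/e) else 0) - c (n/e) := fun e => by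
    rcases Nat.even_or_odd e with he | he
    · rw [he.neg_one_pow, if_pos he.two_dvd]; ring
    · rw [he.neg_one_pow, if_neg (by rcases he with ⟨k, hk⟩; omega)]; ring
  rw [sum_congr rfl (fun e _ => h1 e), sum_sub_distrib, ← mul_sum]
  rw [sum_divisors_even hn (fun e => c (n/e))]
  have : ∑ d ∈ n.divisors, c (n/d) = ∑ d ∈ n.divisors, c d := Nat.sum_div_divisors n c
  rw [this]
  congr 2
  by_cases h2 : 2 ∣ n
  · rw [if_pos h2, if_pos h2]
    rw [← Nat.sum_div_divisors (n/2) c]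
    exact sum_congr rfl (fun d _ => by rw [Nat.div_div_eq_div_mul])
  · rw [if_neg h2, if_neg h2]

lemma Xd_eval (n : ℕ) (hn : 0 < n) :
    ∑ q ∈ (Sset n).filter (fun q => q.2.1 = q.2.2), h1 q
      = (if 2 ∣ n then (2*QS 3 (n/2) - 3*QS 2 (n/2) + QS 1 (n/2))/6 else 0)
        - (QS 3 n - QS 1 n)/12 := by
  rw [sum_diag_xy n hn h1]
  have hinner : ∀ e ∈ n.divisors,
      ∑ a ∈ Ioo 0 (n/e), h1 ((a, n/e - a), (e, e))
        = (-1:ℚ)^e * ((1/2) * G2q (n/e)) + ((1/2) * G2q (n/e) - (1/2) * ABq (n/e)) := by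
    intro e _
    calc ∑ a ∈ Ioo 0 (n/e), h1 ((a, n/e - a), (e, e))
        = ∑ a ∈ Ioo 0 (n/e),
            (((-1:ℚ)^e * (1/2)) * (a:ℚ)^2
              + ((1/2) * (a:ℚ)^2 - (1/2) * ((a:ℚ) * (((n/e : ℕ):ℚ) - (a:ℚ))))) := by
          apply sum_congr rfl
          intro a ha
          rw [mem_Ioo] at ha
          have hc : ((n/e - a : ℕ):ℚ) = ((n/e : ℕ):ℚ) - (a:ℚ) := by
            rw [Nat.cast_sub ha.2.le]
          simp only [h1]
          rw [hc]
          rcases Nat.even_or_odd e with he | he <;> rw [he.neg_one_pow] <;> ring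
      _ = (-1:ℚ)^e * ((1/2) * G2q (n/e)) + ((1/2) * G2q (n/e) - (1/2) * ABq (n/e)) := by
          rw [sum_add_distrib, sum_sub_distrib, ← mul_sum, ← mul_sum, ← mul_sum,
            sumIoo_sq', sumIoo_ab']
          ring
  rw [sum_congr rfl hinner, sum_add_distrib]
  rw [sign_sum_divisors n hn (fun m => (1/2) * G2q m)]
  have h2 : ∑ e ∈ n.divisors, ((1/2) * G2q (n/e) - (1/2) * ABq (n/e))
      = (1/2) * (∑ d ∈ n.divisors, G2q d) - (1/2) * (∑ d ∈ n.divisors, ABq d) := by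
    rw [sum_sub_distrib, ← mul_sum, ← mul_sum,
      Nat.sum_div_divisors n G2q, Nat.sum_div_divisors n ABq]
  rw [h2, sum_G2, sum_AB]
  have hfull : ∑ d ∈ n.divisors, (1/2:ℚ) * G2q d
      = (2*QS 3 n - 3*QS 2 n + QS 1 n)/12 := by
    rw [← mul_sum, sum_G2]; ring
  have hhalf : ∑ d ∈ (n/2).divisors, (1/2:ℚ) * G2q d
      = (2*QS 3 (n/2) - 3*QS 2 (n/2) + QS 1 (n/2))/12 := by
    rw [← mul_sum, sum_G2]; ring
  rw [hfull, hhalf]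
  by_cases hdvd : 2 ∣ n
  · rw [if_pos hdvd, if_pos hdvd]; ring
  · rw [if_neg hdvd, if_neg hdvd]; ring

lemma Ed_eval (n : ℕ) (hn : 0 < n) :
    ∑ q ∈ (Sset n).filter (fun q => q.1.1 = q.1.2), h1 q
      = -(1/2) * (if 2 ∣ n then QS 2 (n/2) else 0) := by
  rw [sum_diag_ab n hn h1]
  have hinner : ∀ d ∈ n.divisors,
      ∑ x ∈ Ioo 0 (n/d), h1 ((d, d), (x, n/d - x))
        = if 2 ∣ (n/d) then -(1/2) * (d:ℚ)^2 else 0 := by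
    intro d hd
    rw [Nat.mem_divisors] at hd
    have hM : 0 < n/d :=
      Nat.div_pos (Nat.le_of_dvd hn hd.1) (Nat.pos_of_dvd_of_pos hd.1 hn)
    calc ∑ x ∈ Ioo 0 (n/d), h1 ((d, d), (x, n/d - x))
        = ∑ x ∈ Ioo 0 (n/d), ((1/2) * (d:ℚ)^2 * (-1:ℚ)^(n/d) * (-1:ℚ)^x) := by
          apply sum_congr rfl
          intro x hx
          rw [mem_Ioo] at hx
          simp only [h1]
          rw [neg_pow_sub hx.2.le]
          ring
      _ = (1/2) * (d:ℚ)^2 * (-1:ℚ)^(n/d) * (∑ x ∈ Ioo 0 (n/d), (-1:ℚ)^x) := by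
          rw [← mul_sum]
      _ = if 2 ∣ (n/d) then -(1/2) * (d:ℚ)^2 else 0 := by
          rw [sumIoo_sign _ hM]
          rcases Nat.even_or_odd (n/d) with he | he
          · rw [if_pos he.two_dvd, if_pos he.two_dvd, he.neg_one_pow]; ring
          · have : ¬ 2 ∣ (n/d) := by rcases he with ⟨k, hk⟩; omega
            rw [if_neg this, if_neg this]; ring
  rw [sum_congr rfl hinner]
  rw [sum_divisors_even_quot hn (fun d => -(1/2) * (d:ℚ)^2)]
  by_cases hdvd : 2 ∣ n
  · rw [if_pos hdvd, if_pos hdvd, ← mul_sum, QS]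
  · rw [if_neg hdvd, if_neg hdvd]; ring

lemma Xf_eval (n : ℕ) (hn : 0 < n) :
    ∑ q ∈ (Sset n).filter (fun q => q.2.1 = q.2.2), fV q = (QS 3 n - QS 1 n)/6 := by
  rw [sum_diag_xy n hn fV]
  have hinner : ∀ e ∈ n.divisors,
      ∑ a ∈ Ioo 0 (n/e), fV ((a, n/e - a), (e, e)) = ABq (n/e) := by
    intro e _
    calc ∑ a ∈ Ioo 0 (n/e), fV ((a, n/e - a), (e, e))
        = ∑ a ∈ Ioo 0 (n/e), (a:ℚ) * (((n/e : ℕ):ℚ) - (a:ℚ)) := by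
          apply sum_congr rfl
          intro a ha
          rw [mem_Ioo] at ha
          have hc : ((n/e - a : ℕ):ℚ) = ((n/e : ℕ):ℚ) - (a:ℚ) := by
            rw [Nat.cast_sub ha.2.le]
          simp only [fV]
          rw [hc]
          rcases Nat.even_or_odd e with he | he <;> rw [he.neg_one_pow] <;> ring
      _ = ABq (n/e) := sumIoo_ab' (n/e)
  rw [sum_congr rfl hinner, Nat.sum_div_divisors n ABq, sum_AB]

lemma core (n : ℕ) (hn : 0 < n) :
    12 * ∑ q ∈ Sset n, fV q
      = QS 3 n - QS 1 n + (if 2 ∣ n then 4 * QS 3 (n/2) + 2 * QS 1 (n/2) else 0) := by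
  rw [V_eq n, Xd_eval n hn, Ed_eval n hn, Xf_eval n hn]
  by_cases hdvd : 2 ∣ n
  · rw [if_pos hdvd, if_pos hdvd, if_pos hdvd]; ring
  · rw [if_neg hdvd, if_neg hdvd, if_neg hdvd]; ring


lemma QS_eq_sig (k m : ℕ) : QS k m = (sig k m : ℚ) := by
  rw [QS, sig]; push_cast; rfl

noncomputable def w (k : ℕ) : ℚ := ∑ d ∈ k.divisors, (d:ℚ) * (-1)^(k/d)

lemma w_eval (k : ℕ) (hk : 0 < k) :
    w k = 2 * (if 2 ∣ k then (sig 1 (k/2) : ℚ) else 0) - (sig 1 k : ℚ) := by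
  have hpt : ∀ d : ℕ, (d:ℚ) * (-1)^(k/d) = (if 2 ∣ k/d then 2*(d:ℚ) else 0) - (d:ℚ) := by
    intro d
    rcases Nat.even_or_odd (k/d) with he | he
    · rw [he.neg_one_pow, if_pos he.two_dvd]; ring
    · rw [he.neg_one_pow, if_neg (by rcases he with ⟨j, hj⟩; omega)]; ring
  rw [w, sum_congr rfl (fun d _ => hpt d), sum_sub_distrib,
    sum_divisors_even_quot hk (fun d => 2*(d:ℚ))]
  have h1 : ∑ d ∈ k.divisors, (d:ℚ) = (sig 1 k : ℚ) := by
    rw [sig]; push_cast; simp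
  rw [h1]
  by_cases h2 : 2 ∣ k
  · rw [if_pos h2, if_pos h2, ← mul_sum]
    have : ∑ d ∈ (k/2).divisors, (d:ℚ) = (sig 1 (k/2) : ℚ) := by
      rw [sig]; push_cast; simp
    rw [this]
  · rw [if_neg h2, if_neg h2]; ring

lemma conv_eq_V (n : ℕ) (hn : 0 < n) :
    ∑ i ∈ Ioo 0 n, w i * w (n - i) = ∑ q ∈ Sset n, fV q := by
  have step1 : ∑ i ∈ Ioo 0 n, w i * w (n - i)
      = ∑ i ∈ Ioo 0 n, ∑ p ∈ i.divisors ×ˢ (n-i).divisors,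
          ((p.1:ℚ) * (-1)^(i/p.1)) * ((p.2:ℚ) * (-1)^((n-i)/p.2)) := by
    apply sum_congr rfl
    intro i _
    rw [w, w, sum_mul_sum, ← sum_product']
  rw [step1, ← sum_sigma (Ioo 0 n) (fun i => i.divisors ×ˢ (n-i).divisors)
      (fun p => ((p.2.1:ℚ) * (-1)^(p.1/p.2.1)) * ((p.2.2:ℚ) * (-1)^((n-p.1)/p.2.2)))]
  apply Finset.sum_nbij'
    (fun p => ((p.2.1, p.2.2), (p.1/p.2.1, (n - p.1)/p.2.2)))
    (fun q => (⟨q.1.1 * q.2.1, (q.1.1, q.1.2)⟩ : Σ _ : ℕ, ℕ × ℕ))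
  · rintro ⟨i, d, e⟩ hp
    simp only [mem_sigma, mem_Ioo, mem_product, Nat.mem_divisors] at hp
    obtain ⟨⟨hi0, hin⟩, ⟨hd, _⟩, he, hne⟩ := hp
    dsimp only
    rw [mem_Sset]
    have hd0 : 0 < d := Nat.pos_of_dvd_of_pos hd hi0
    have hni : 0 < n - i := by omega
    have he0 : 0 < e := Nat.pos_of_dvd_of_pos he hni
    refine ⟨hd0, he0, Nat.div_pos (Nat.le_of_dvd hi0 hd) hd0,
      Nat.div_pos (Nat.le_of_dvd hni he) he0, ?_⟩
    rw [Nat.mul_div_cancel' hd, Nat.mul_div_cancel' he]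
    omega
  · rintro ⟨⟨a, b⟩, x, y⟩ hq
    rw [mem_Sset] at hq
    obtain ⟨ha, hb, hx, hy, he⟩ := hq
    simp only at he
    dsimp only
    simp only [mem_sigma, mem_Ioo, mem_product, Nat.mem_divisors]
    have h1 : 0 < a * x := Nat.mul_pos ha hx
    have h2 : 0 < b * y := Nat.mul_pos hb hy
    refine ⟨⟨by omega, by omega⟩, ⟨⟨x, rfl⟩, by omega⟩, ⟨y, by omega⟩, by omega⟩
  · rintro ⟨i, d, e⟩ hp
    simp only [mem_sigma, mem_Ioo, mem_product, Nat.mem_divisors] at hp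
    obtain ⟨⟨hi0, hin⟩, ⟨hd, _⟩, he, hne⟩ := hp
    dsimp only
    have h1 : d * (i / d) = i := Nat.mul_div_cancel' hd
    rw [h1]
  · rintro ⟨⟨a, b⟩, x, y⟩ hq
    rw [mem_Sset] at hq
    obtain ⟨ha, hb, hx, hy, he⟩ := hq
    simp only at he
    dsimp only
    have h1 : a * x / a = x := Nat.mul_div_cancel_left x ha
    have h2 : n - a * x = b * y := by omega
    rw [h1, h2, Nat.mul_div_cancel_left y hb]
  · rintro ⟨i, d, e⟩ hp
    dsimp only
    simp only [fV]
    ring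




lemma sum_range_peel {g : ℕ → ℚ} {n : ℕ} (hn : 0 < n) :
    ∑ k ∈ range (n+1), g k = g 0 + g n + ∑ k ∈ Ioo 0 n, g k := by
  have h : range (n+1) = insert 0 (insert n (Ioo 0 n)) := by
    ext a; simp only [mem_range, mem_insert, mem_Ioo]; omega
  rw [h, sum_insert (by simp only [mem_insert, mem_Ioo]; omega),
    sum_insert (by simp only [mem_Ioo]; omega)]
  ring

lemma hL_coeff (k : ℕ) :
    PowerSeries.coeff k (E2t 1 - PowerSeries.C (R := ℚ) 2 * E2t 2)
      = if k = 0 then -1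
        else -24 * (sig 1 k : ℚ) + (if 2 ∣ k then 48 * (sig 1 (k/2) : ℚ) else 0) := by
  rw [map_sub, PowerSeries.coeff_C_mul, E2t, E2t, PowerSeries.coeff_mk, PowerSeries.coeff_mk]
  rcases eq_or_ne k 0 with rfl | hk
  · norm_num
  · rw [if_neg hk, if_neg hk, if_neg hk, if_pos (one_dvd k), Nat.div_one]
    by_cases h2 : 2 ∣ k
    · rw [if_pos h2, if_pos h2]; ring
    · rw [if_neg h2, if_neg h2]; ring

lemma hLw (j : ℕ) (hj : 0 < j) :
    (if j = 0 then (-1:ℚ)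
      else -24 * (sig 1 j : ℚ) + (if 2 ∣ j then 48 * (sig 1 (j/2) : ℚ) else 0))
    = 24 * w j := by
  rw [if_neg hj.ne', w_eval j hj]
  by_cases h2 : 2 ∣ j
  · rw [if_pos h2, if_pos h2]; ring
  · rw [if_neg h2, if_neg h2]; ring

/-- (E₂(q) − 2E₂(q²))² = (1/5)E₄(q) + (4/5)E₄(q²) as formal q-series. -/
theorem L_two_sq :
    (E2t 1 - PowerSeries.C (R := ℚ) 2 * E2t 2) ^ 2
      = PowerSeries.C (R := ℚ) (1/5) * E4t 1 + PowerSeries.C (R := ℚ) (4/5) * E4t 2 := by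
  ext n
  rw [pow_two, PowerSeries.coeff_mul, map_add, PowerSeries.coeff_C_mul,
    PowerSeries.coeff_C_mul, E4t, E4t, PowerSeries.coeff_mk, PowerSeries.coeff_mk]
  simp only [hL_coeff]
  rw [Finset.Nat.sum_antidiagonal_eq_sum_range_succ_mk]
  rcases Nat.eq_zero_or_pos n with rfl | hn
  · norm_num
  · rw [sum_range_peel hn]
    have hmid : ∑ k ∈ Ioo 0 n,
        ((if k = 0 then (-1:ℚ)
          else -24 * (sig 1 k : ℚ) + (if 2 ∣ k then 48 * (sig 1 (k/2) : ℚ) else 0))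
         * (if n - k = 0 then (-1:ℚ)
          else -24 * (sig 1 (n-k) : ℚ) + (if 2 ∣ (n-k) then 48 * (sig 1 ((n-k)/2) : ℚ) else 0)))
        = 576 * ∑ q ∈ Sset n, fV q := by
      rw [← conv_eq_V n hn, mul_sum]
      apply sum_congr rfl
      intro k hk
      rw [mem_Ioo] at hk
      rw [hLw k hk.1, hLw (n-k) (by omega)]
      ring
    rw [hmid]
    have hcore := core n hn
    simp only [QS_eq_sig] at hcore
    by_cases h2 : 2 ∣ n
    · norm_num [hn.ne']
      simp only [if_pos h2] at hcore ⊢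
      linarith [hcore]
    · norm_num [hn.ne']
      simp only [if_neg h2] at hcore ⊢
      linarith [hcore]
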